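/- arXiv:math/0605066 — 2 statements merged into one kernel-verified Lean document; each statement's English description precedes it below -/
import Mathlib

section
/- Let W = (ω_1,…,ω_k) be a k-web on an open connected set U ⊆ ℂ² containing 0 and let X be a holomorphic vector field which is an infinitesimal automorphism of W, i.e. (L_X ω_i) ∧ ω_i = 0 on U for all i. If (η_1,…,η_k) is an abelian relation of W, then (L_X η_1,…,L_X η_k) is again an abelian relation of W: each L_X η_i is closed, (L_X η_i) ∧ ω_i = 0, and L_X η_1 + ⋯ + L_X η_k = 0. Moreover the map (η_1,…,η_k) ↦ (L_X η_1,…,L_X η_k) is ℂ-linear on abelian relations. -/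
open Complex Filter Topology

noncomputable section

/-- A point of the complex plane `ℂ²`. -/
abbrev Pt : Type := ℂ × ℂ

/-- A (holomorphic) 1-form `A dx + B dy` on (an open subset of) `ℂ²`,
identified with the pair of functions `(A, B)`. -/
abbrev Form1 : Type := (Pt → ℂ) × (Pt → ℂ)

/-- The complex partial derivative `∂f/∂x`. -/
noncomputable def pdx (f : Pt → ℂ) (p : Pt) : ℂ := fderiv ℂ f p (1, 0)

/-- The complex partial derivative `∂f/∂y`. -/
noncomputable def pdy (f : Pt → ℂ) (p : Pt) : ℂ := fderiv ℂ f p (0, 1)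

/-- The derivative `X(f) = P ∂f/∂x + Q ∂f/∂y` of `f` along the vector field `X = (P, Q)`. -/
noncomputable def Xf (P Q f : Pt → ℂ) (p : Pt) : ℂ := P p * pdx f p + Q p * pdy f p

/-- The contraction `i_X ω = A·P + B·Q` of the 1-form `ω = (A,B)` with `X = (P,Q)`. -/
noncomputable def contr (P Q : Pt → ℂ) (ω : Form1) (p : Pt) : ℂ := ω.1 p * P p + ω.2 p * Q p

/-- The wedge `ω ∧ ω' = A·B' − B·A'` of two 1-forms, as a function. -/
noncomputable def wedge (ω ω' : Form1) (p : Pt) : ℂ := ω.1 p * ω'.2 p - ω.2 p * ω'.1 p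

/-- The differential `df = (∂f/∂x, ∂f/∂y)` of a function. -/
noncomputable def fd (f : Pt → ℂ) : Form1 := (pdx f, pdy f)

/-- A 1-form `(A,B)` is closed on `U` if `∂A/∂y = ∂B/∂x` on `U`. -/
def IsClosedOn (ω : Form1) (U : Set Pt) : Prop := ∀ p ∈ U, pdy ω.1 p = pdx ω.2 p

/-- The Lie derivative `L_X ω` of the 1-form `ω = (A,B)` with respect to `X = (P,Q)`:
`L_X ω = (X(A) + A ∂P/∂x + B ∂Q/∂x, X(B) + A ∂P/∂y + B ∂Q/∂y)`. -/
noncomputable def lie (P Q : Pt → ℂ) (ω : Form1) : Form1 :=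
  (fun p => Xf P Q ω.1 p + ω.1 p * pdx P p + ω.2 p * pdx Q p,
   fun p => Xf P Q ω.2 p + ω.1 p * pdy P p + ω.2 p * pdy Q p)

/-- A 1-form is holomorphic on `U` if both its components are. -/
def AnalyticForm (ω : Form1) (U : Set Pt) : Prop :=
  AnalyticOnNhd ℂ ω.1 U ∧ AnalyticOnNhd ℂ ω.2 U
/-- A `k`-web on `U`: a `k`-tuple of holomorphic 1-forms, each nonvanishing on `U`,
pairwise transverse at the origin. -/
structure IsWeb {k : ℕ} (ω : Fin k → Form1) (U : Set Pt) : Prop where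
  analytic : ∀ i, AnalyticForm (ω i) U
  nonvanishing : ∀ i, ∀ p ∈ U, ((ω i).1 p, (ω i).2 p) ≠ (0, 0)
  transverse : ∀ i j, i ≠ j → wedge (ω i) (ω j) 0 ≠ 0

/-- An abelian relation `(η_1, …, η_k)` on `V` of the web given by `(ω_1, …, ω_k)`. -/
structure IsAbelianRelOn {k : ℕ} (ω : Fin k → Form1) (η : Fin k → Form1) (V : Set Pt) :
    Prop where
  analytic : ∀ i, AnalyticForm (η i) V
  closed : ∀ i, IsClosedOn (η i) V
  tangent : ∀ i, ∀ p ∈ V, wedge (η i) (ω i) p = 0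
  sum_fst : ∀ p ∈ V, ∑ i, (η i).1 p = 0
  sum_snd : ∀ p ∈ V, ∑ i, (η i).2 p = 0

/-- `U` is a polydisc centered at the origin. -/
def IsPolydisc (U : Set Pt) : Prop :=
  ∃ r s : ℝ, 0 < r ∧ 0 < s ∧ U = Metric.ball (0 : ℂ) r ×ˢ Metric.ball (0 : ℂ) s

/-- `X = (P,Q)` is an infinitesimal automorphism of the web `(ω_1, …, ω_k)` on `U`:
`(L_X ω_i) ∧ ω_i = 0` on `U` for all `i`. -/
def IsInfAut (P Q : Pt → ℂ) {k : ℕ} (ω : Fin k → Form1) (U : Set Pt) : Prop :=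
  ∀ i, ∀ p ∈ U, wedge (lie P Q (ω i)) (ω i) p = 0

/-- `X = (P,Q)` is transverse to the web `(ω_1, …, ω_k)` on `U`:
`i_X ω_i` is nonvanishing on `U` for all `i`. -/
def IsTransverseTo (P Q : Pt → ℂ) {k : ℕ} (ω : Fin k → Form1) (U : Set Pt) : Prop :=
  ∀ i, ∀ p ∈ U, contr P Q (ω i) p ≠ 0

/-- `u` is the canonical first integral of the 1-form `ω` with respect to `X = (P,Q)` on `U`:
`u` is holomorphic, `u(0) = 0` and `du = ω / (i_X ω)`. -/
def IsCanonicalFI (P Q : Pt → ℂ) (ω : Form1) (u : Pt → ℂ) (U : Set Pt) : Prop :=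
  AnalyticOnNhd ℂ u U ∧ u 0 = 0 ∧
    ∀ p ∈ U, pdx u p = ω.1 p / contr P Q ω p ∧ pdy u p = ω.2 p / contr P Q ω p

section Helpers

lemma pdv_congr {f g : Pt → ℂ} {p : Pt} (h : f =ᶠ[nhds p] g) (v : Pt) :
    fderiv ℂ f p v = fderiv ℂ g p v := by rw [h.fderiv_eq]

lemma pdv_zero_on {U : Set Pt} (hU : IsOpen U) {f : Pt → ℂ} (hf : ∀ q ∈ U, f q = 0)
    {p : Pt} (hp : p ∈ U) (v : Pt) : fderiv ℂ f p v = 0 := by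
  have h : f =ᶠ[nhds p] fun _ => (0 : ℂ) := by
    filter_upwards [hU.mem_nhds hp] with q hq using hf q hq
  rw [h.fderiv_eq]
  simp

lemma pdv_mul {f g : Pt → ℂ} {p : Pt} (hf : DifferentiableAt ℂ f p)
    (hg : DifferentiableAt ℂ g p) (v : Pt) :
    fderiv ℂ (fun q => f q * g q) p v = fderiv ℂ f p v * g p + f p * fderiv ℂ g p v := by
  rw [fderiv_fun_mul hf hg]
  simp only [ContinuousLinearMap.add_apply, ContinuousLinearMap.smul_apply, smul_eq_mul]
  ring

lemma pdv_add {f g : Pt → ℂ} {p : Pt} (hf : DifferentiableAt ℂ f p)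
    (hg : DifferentiableAt ℂ g p) (v : Pt) :
    fderiv ℂ (fun q => f q + g q) p v = fderiv ℂ f p v + fderiv ℂ g p v := by
  rw [fderiv_fun_add hf hg]; rfl

lemma pdv_sub {f g : Pt → ℂ} {p : Pt} (hf : DifferentiableAt ℂ f p)
    (hg : DifferentiableAt ℂ g p) (v : Pt) :
    fderiv ℂ (fun q => f q - g q) p v = fderiv ℂ f p v - fderiv ℂ g p v := by
  rw [fderiv_fun_sub hf hg]; rfl

lemma pdv_const_mul {f : Pt → ℂ} {p : Pt} (hf : DifferentiableAt ℂ f p) (c v : Pt → ℂ)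
    (cc : ℂ) : fderiv ℂ (fun q => cc * f q) p = cc • fderiv ℂ f p := fderiv_const_mul hf cc

lemma pdv_sum {k : ℕ} {f : Fin k → Pt → ℂ} {p : Pt}
    (hf : ∀ i, DifferentiableAt ℂ (f i) p) (v : Pt) :
    fderiv ℂ (fun q => ∑ i, f i q) p v = ∑ i, fderiv ℂ (f i) p v := by
  rw [fderiv_fun_sum fun i _ => hf i]
  simp

lemma analyticOnNhd_pdx {f : Pt → ℂ} {U : Set Pt} (hf : AnalyticOnNhd ℂ f U) :
    AnalyticOnNhd ℂ (pdx f) U :=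
  (ContinuousLinearMap.apply ℂ ℂ (((1 : ℂ), (0 : ℂ)) : Pt)).comp_analyticOnNhd hf.fderiv

lemma analyticOnNhd_pdy {f : Pt → ℂ} {U : Set Pt} (hf : AnalyticOnNhd ℂ f U) :
    AnalyticOnNhd ℂ (pdy f) U :=
  (ContinuousLinearMap.apply ℂ ℂ (((0 : ℂ), (1 : ℂ)) : Pt)).comp_analyticOnNhd hf.fderiv

lemma pdy_pdx_comm {g : Pt → ℂ} {p : Pt} (hg : AnalyticAt ℂ g p) :
    pdy (pdx g) p = pdx (pdy g) p := by
  have hsymm : IsSymmSndFDerivAt ℂ g p :=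
    (hg.contDiffAt (n := 2)).isSymmSndFDerivAt (by simp)
  have hd : DifferentiableAt ℂ (fderiv ℂ g) p := hg.fderiv.differentiableAt
  have key : ∀ v w : Pt, fderiv ℂ (fun q => fderiv ℂ g q v) p w
      = fderiv ℂ (fderiv ℂ g) p w v := by
    intro v w
    rw [fderiv_clm_apply hd (differentiableAt_const v)]
    simp
  show fderiv ℂ (fun q => fderiv ℂ g q ((1 : ℂ), (0 : ℂ))) p ((0 : ℂ), (1 : ℂ))
      = fderiv ℂ (fun q => fderiv ℂ g q ((0 : ℂ), (1 : ℂ))) p ((1 : ℂ), (0 : ℂ))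
  rw [key, key]
  exact hsymm _ _

lemma wedge3 {a1 a2 b1 b2 c1 c2 : ℂ} (hb : ((b1 : ℂ), (b2 : ℂ)) ≠ ((0 : ℂ), (0 : ℂ)))
    (h1 : a1 * b2 - a2 * b1 = 0) (h2 : c1 * b2 - c2 * b1 = 0) :
    a1 * c2 - a2 * c1 = 0 := by
  by_cases hb1 : b1 = 0
  · have hb2 : b2 ≠ 0 := by
      intro h; exact hb (by simp [hb1, h])
    apply mul_left_cancel₀ hb2
    linear_combination c2 * h1 - a2 * h2
  · apply mul_left_cancel₀ hb1
    linear_combination c1 * h1 - a1 * h2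

end Helpers

/-- If `X` is an infinitesimal automorphism of the `k`-web
`W = (ω_1,…,ω_k)` on an open connected `U ∋ 0`, then `L_X` maps abelian relations of `W`
to abelian relations of `W`, and does so `ℂ`-linearly. -/
theorem stmt_2 (k : ℕ) (U : Set Pt) (hUopen : IsOpen U) (hUconn : IsConnected U)
    (h0U : (0 : Pt) ∈ U) (ω : Fin k → Form1) (hweb : IsWeb ω U) (P Q : Pt → ℂ)
    (hP : AnalyticOnNhd ℂ P U) (hQ : AnalyticOnNhd ℂ Q U)
    (hinf : IsInfAut P Q ω U) :
    (∀ η : Fin k → Form1, IsAbelianRelOn ω η U →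
      IsAbelianRelOn ω (fun i => lie P Q (η i)) U) ∧
    (∀ η η' : Fin k → Form1, ∀ c c' : ℂ,
      IsAbelianRelOn ω η U → IsAbelianRelOn ω η' U → ∀ i, ∀ p ∈ U,
        (lie P Q (fun q => c * (η i).1 q + c' * (η' i).1 q,
                  fun q => c * (η i).2 q + c' * (η' i).2 q)).1 p
          = c * (lie P Q (η i)).1 p + c' * (lie P Q (η' i)).1 p ∧
        (lie P Q (fun q => c * (η i).1 q + c' * (η' i).1 q,
                  fun q => c * (η i).2 q + c' * (η' i).2 q)).2 p
          = c * (lie P Q (η i)).2 p + c' * (lie P Q (η' i)).2 p) := by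
  constructor
  · intro η hη
    refine ⟨?_, ?_, ?_, ?_, ?_⟩
    · -- analyticity
      intro i
      obtain ⟨hA, hB⟩ := hη.analytic i
      constructor
      · exact (((hP.mul (analyticOnNhd_pdx hA)).add (hQ.mul (analyticOnNhd_pdy hA))).add
          (hA.mul (analyticOnNhd_pdx hP))).add (hB.mul (analyticOnNhd_pdx hQ))
      · exact (((hP.mul (analyticOnNhd_pdx hB)).add (hQ.mul (analyticOnNhd_pdy hB))).add
          (hA.mul (analyticOnNhd_pdy hP))).add (hB.mul (analyticOnNhd_pdy hQ))
    · -- closedness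
      intro i p hp
      obtain ⟨hA, hB⟩ := hη.analytic i
      have hganal : AnalyticOnNhd ℂ (fun q => (η i).1 q * P q + (η i).2 q * Q q) U :=
        (hA.mul hP).add (hB.mul hQ)
      have e1 : (lie P Q (η i)).1 =ᶠ[nhds p]
          pdx (fun q => (η i).1 q * P q + (η i).2 q * Q q) := by
        filter_upwards [hUopen.mem_nhds hp] with q hq
        have dA := (hA q hq).differentiableAt
        have dB := (hB q hq).differentiableAt
        have dP := (hP q hq).differentiableAt
        have dQ := (hQ q hq).differentiableAt
        have hcl := hη.closed i q hq
        show Xf P Q (η i).1 q + (η i).1 q * pdx P q + (η i).2 q * pdx Q q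
          = fderiv ℂ (fun q' => (η i).1 q' * P q' + (η i).2 q' * Q q') q ((1 : ℂ), (0 : ℂ))
        rw [pdv_add (f := fun q => (η i).1 q * P q) (g := fun q => (η i).2 q * Q q) (dA.mul dP) (dB.mul dQ), pdv_mul dA dP, pdv_mul dB dQ]
        simp only [Xf, pdx, pdy] at hcl ⊢
        linear_combination Q q * hcl
      have e2 : (lie P Q (η i)).2 =ᶠ[nhds p]
          pdy (fun q => (η i).1 q * P q + (η i).2 q * Q q) := by
        filter_upwards [hUopen.mem_nhds hp] with q hq
        have dA := (hA q hq).differentiableAt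
        have dB := (hB q hq).differentiableAt
        have dP := (hP q hq).differentiableAt
        have dQ := (hQ q hq).differentiableAt
        have hcl := hη.closed i q hq
        show Xf P Q (η i).2 q + (η i).1 q * pdy P q + (η i).2 q * pdy Q q
          = fderiv ℂ (fun q' => (η i).1 q' * P q' + (η i).2 q' * Q q') q ((0 : ℂ), (1 : ℂ))
        rw [pdv_add (f := fun q => (η i).1 q * P q) (g := fun q => (η i).2 q * Q q) (dA.mul dP) (dB.mul dQ), pdv_mul dA dP, pdv_mul dB dQ]
        simp only [Xf, pdx, pdy] at hcl ⊢
        linear_combination (-(P q)) * hcl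
      calc pdy (lie P Q (η i)).1 p
          = pdy (pdx (fun q => (η i).1 q * P q + (η i).2 q * Q q)) p :=
            pdv_congr e1 ((0 : ℂ), (1 : ℂ))
        _ = pdx (pdy (fun q => (η i).1 q * P q + (η i).2 q * Q q)) p :=
            pdy_pdx_comm (hganal p hp)
        _ = pdx (lie P Q (η i)).2 p := (pdv_congr e2 ((1 : ℂ), (0 : ℂ))).symm
    · -- tangency
      intro i p hp
      obtain ⟨hA, hB⟩ := hη.analytic i
      obtain ⟨hC, hD⟩ := (hweb.analytic i)
      have dA := (hA p hp).differentiableAt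
      have dB := (hB p hp).differentiableAt
      have dC := (hC p hp).differentiableAt
      have dD := (hD p hp).differentiableAt
      have hW : ∀ q ∈ U, (η i).1 q * (ω i).2 q - (η i).2 q * (ω i).1 q = 0 :=
        fun q hq => hη.tangent i q hq
      have h3 : (η i).1 p * (ω i).2 p - (η i).2 p * (ω i).1 p = 0 := hW p hp
      have hW1 : fderiv ℂ (η i).1 p ((1 : ℂ), (0 : ℂ)) * (ω i).2 p
            + (η i).1 p * fderiv ℂ (ω i).2 p ((1 : ℂ), (0 : ℂ))
          - (fderiv ℂ (η i).2 p ((1 : ℂ), (0 : ℂ)) * (ω i).1 p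
            + (η i).2 p * fderiv ℂ (ω i).1 p ((1 : ℂ), (0 : ℂ))) = 0 := by
        rw [← pdv_mul dA dD, ← pdv_mul dB dC, ← pdv_sub (f := fun q => (η i).1 q * (ω i).2 q) (g := fun q => (η i).2 q * (ω i).1 q) (dA.mul dD) (dB.mul dC)]
        exact pdv_zero_on hUopen hW hp _
      have hW2 : fderiv ℂ (η i).1 p ((0 : ℂ), (1 : ℂ)) * (ω i).2 p
            + (η i).1 p * fderiv ℂ (ω i).2 p ((0 : ℂ), (1 : ℂ))
          - (fderiv ℂ (η i).2 p ((0 : ℂ), (1 : ℂ)) * (ω i).1 p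
            + (η i).2 p * fderiv ℂ (ω i).1 p ((0 : ℂ), (1 : ℂ))) = 0 := by
        rw [← pdv_mul dA dD, ← pdv_mul dB dC, ← pdv_sub (f := fun q => (η i).1 q * (ω i).2 q) (g := fun q => (η i).2 q * (ω i).1 q) (dA.mul dD) (dB.mul dC)]
        exact pdv_zero_on hUopen hW hp _
      have h4 : (η i).1 p * (lie P Q (ω i)).2 p - (η i).2 p * (lie P Q (ω i)).1 p = 0 := by
        refine wedge3 (hweb.nonvanishing i p hp) h3 ?_
        exact hinf i p hp
      show wedge (lie P Q (η i)) (ω i) p = 0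
      simp only [wedge, lie, Xf, pdx, pdy] at h4 ⊢
      linear_combination P p * hW1 + Q p * hW2
        + (fderiv ℂ P p ((1 : ℂ), (0 : ℂ)) + fderiv ℂ Q p ((0 : ℂ), (1 : ℂ))) * h3 - h4
    · -- sum of first components
      intro p hp
      have dA : ∀ i : Fin k, DifferentiableAt ℂ (η i).1 p :=
        fun i => ((hη.analytic i).1 p hp).differentiableAt
      have hsx : ∑ i, fderiv ℂ (η i).1 p ((1 : ℂ), (0 : ℂ)) = 0 :=
        (pdv_sum dA _).symm.trans (pdv_zero_on hUopen hη.sum_fst hp _)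
      have hsy : ∑ i, fderiv ℂ (η i).1 p ((0 : ℂ), (1 : ℂ)) = 0 :=
        (pdv_sum dA _).symm.trans (pdv_zero_on hUopen hη.sum_fst hp _)
      have hA0 := hη.sum_fst p hp
      have hB0 := hη.sum_snd p hp
      simp only [lie, Xf, pdx, pdy]
      calc ∑ i, (P p * fderiv ℂ (η i).1 p ((1 : ℂ), (0 : ℂ))
              + Q p * fderiv ℂ (η i).1 p ((0 : ℂ), (1 : ℂ))
              + (η i).1 p * fderiv ℂ P p ((1 : ℂ), (0 : ℂ))
              + (η i).2 p * fderiv ℂ Q p ((1 : ℂ), (0 : ℂ)))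
          = P p * (∑ i, fderiv ℂ (η i).1 p ((1 : ℂ), (0 : ℂ)))
            + Q p * (∑ i, fderiv ℂ (η i).1 p ((0 : ℂ), (1 : ℂ)))
            + (∑ i, (η i).1 p) * fderiv ℂ P p ((1 : ℂ), (0 : ℂ))
            + (∑ i, (η i).2 p) * fderiv ℂ Q p ((1 : ℂ), (0 : ℂ)) := by
            rw [Finset.mul_sum, Finset.mul_sum, Finset.sum_mul, Finset.sum_mul,
              ← Finset.sum_add_distrib, ← Finset.sum_add_distrib, ← Finset.sum_add_distrib]
        _ = 0 := by rw [hsx, hsy, hA0, hB0]; ring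
    · -- sum of second components
      intro p hp
      have dB : ∀ i : Fin k, DifferentiableAt ℂ (η i).2 p :=
        fun i => ((hη.analytic i).2 p hp).differentiableAt
      have hsx : ∑ i, fderiv ℂ (η i).2 p ((1 : ℂ), (0 : ℂ)) = 0 :=
        (pdv_sum dB _).symm.trans (pdv_zero_on hUopen hη.sum_snd hp _)
      have hsy : ∑ i, fderiv ℂ (η i).2 p ((0 : ℂ), (1 : ℂ)) = 0 :=
        (pdv_sum dB _).symm.trans (pdv_zero_on hUopen hη.sum_snd hp _)
      have hA0 := hη.sum_fst p hp
      have hB0 := hη.sum_snd p hp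
      simp only [lie, Xf, pdx, pdy]
      calc ∑ i, (P p * fderiv ℂ (η i).2 p ((1 : ℂ), (0 : ℂ))
              + Q p * fderiv ℂ (η i).2 p ((0 : ℂ), (1 : ℂ))
              + (η i).1 p * fderiv ℂ P p ((0 : ℂ), (1 : ℂ))
              + (η i).2 p * fderiv ℂ Q p ((0 : ℂ), (1 : ℂ)))
          = P p * (∑ i, fderiv ℂ (η i).2 p ((1 : ℂ), (0 : ℂ)))
            + Q p * (∑ i, fderiv ℂ (η i).2 p ((0 : ℂ), (1 : ℂ)))
            + (∑ i, (η i).1 p) * fderiv ℂ P p ((0 : ℂ), (1 : ℂ))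
            + (∑ i, (η i).2 p) * fderiv ℂ Q p ((0 : ℂ), (1 : ℂ)) := by
            rw [Finset.mul_sum, Finset.mul_sum, Finset.sum_mul, Finset.sum_mul,
              ← Finset.sum_add_distrib, ← Finset.sum_add_distrib, ← Finset.sum_add_distrib]
        _ = 0 := by rw [hsx, hsy, hA0, hB0]; ring
  · -- linearity
    intro η η' c c' hη hη' i p hp
    have dA := ((hη.analytic i).1 p hp).differentiableAt
    have dB := ((hη.analytic i).2 p hp).differentiableAt
    have dA' := ((hη'.analytic i).1 p hp).differentiableAt
    have dB' := ((hη'.analytic i).2 p hp).differentiableAt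
    have comb : ∀ (f g : Pt → ℂ), DifferentiableAt ℂ f p → DifferentiableAt ℂ g p →
        ∀ v : Pt, fderiv ℂ (fun q => c * f q + c' * g q) p v
          = c * fderiv ℂ f p v + c' * fderiv ℂ g p v := by
      intro f g hf hg v
      rw [pdv_add (hf.const_mul c) (hg.const_mul c'), fderiv_const_mul hf c,
        fderiv_const_mul hg c']
      simp
    constructor
    · simp only [lie, Xf, pdx, pdy]
      rw [comb _ _ dA dA' ((1 : ℂ), (0 : ℂ)), comb _ _ dA dA' ((0 : ℂ), (1 : ℂ))]
      ring
    · simp only [lie, Xf, pdx, pdy]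
      rw [comb _ _ dB dB' ((1 : ℂ), (0 : ℂ)), comb _ _ dB dB' ((0 : ℂ), (1 : ℂ))]
      ring
end
end

section
/- Let U ⊆ ℂ² be a polydisc centered at 0, W = (ω_1,…,ω_k) a k-web on U, X a transverse infinitesimal automorphism of W with X(0) ≠ (0,0), u_1,…,u_k the canonical first integrals with respect to X, and x̃ a first integral of X (x̃(0) = 0, X(x̃) = 0, dx̃(0) ≠ (0,0)). Let c_1,…,c_k ∈ ℂ and r ∈ ℕ be such that c_1·u_1^r·du_1 + ⋯ + c_k·u_k^r·du_k = 0 on U. Then there exists a holomorphic function g defined near 0 ∈ ℂ, with germ at 0 unique, such that c_1·u_1^{r+1}·du_1 + ⋯ + c_k·u_k^{r+1}·du_k + (g∘x̃)·dx̃ = 0 on a neighborhood of 0. -/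
open Complex Filter Topology

noncomputable section

lemma clm_eval (L : Pt →L[ℂ] ℂ) (v : Pt) : L v = v.1 * L (1,0) + v.2 * L (0,1) := by
  have hv : v = v.1 • ((1:ℂ),(0:ℂ)) + v.2 • ((0:ℂ),(1:ℂ)) := by
    simp [Prod.ext_iff]
  rw [← smul_eq_mul, ← smul_eq_mul, ← map_smul, ← map_smul, ← map_add, ← hv]

lemma fderiv_eval (f : Pt → ℂ) (p v : Pt) :
    fderiv ℂ f p v = v.1 * pdx f p + v.2 * pdy f p := clm_eval _ _

lemma two_dim_ker {a b P0 Q0 v1 v2 : ℂ} (h1 : a*v1 + b*v2 = 0) (hX : P0*a + Q0*b = 0)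
    (hab : ¬(a = 0 ∧ b = 0)) : v1*Q0 = v2*P0 := by
  rcases not_and_or.1 hab with h | h
  · have h3 : a*(v1*Q0 - v2*P0) = 0 := by linear_combination Q0*h1 - v2*hX
    have := (mul_eq_zero.1 h3).resolve_left h
    exact sub_eq_zero.1 this
  · have h3 : b*(v1*Q0 - v2*P0) = 0 := by linear_combination v1*hX - P0*h1
    have := (mul_eq_zero.1 h3).resolve_left h
    exact sub_eq_zero.1 this

lemma ker_triv {a b α β Pp Qp v1 v2 : ℂ} (h1 : a*v1+b*v2=0) (h2 : α*v1+β*v2=0)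
    (hX : Pp*a + Qp*b = 0) (hab : ¬(a=0∧b=0)) (hw : α*Pp+β*Qp ≠ 0) : v1 = 0 ∧ v2 = 0 := by
  have hk : v1*Qp = v2*Pp := two_dim_ker h1 hX hab
  constructor
  · have h3 : (α*Pp+β*Qp)*v1 = 0 := by linear_combination Pp*h2 + β*hk
    exact (mul_eq_zero.1 h3).resolve_left hw
  · have h3 : (α*Pp+β*Qp)*v2 = 0 := by linear_combination Qp*h2 - α*hk
    exact (mul_eq_zero.1 h3).resolve_left hw

lemma parallel {Pp Qp e f c d : ℂ} (h1 : Pp*e + Qp*f = 0) (h2 : Pp*c + Qp*d = 0)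
    (hPQ : ¬(Pp=0 ∧ Qp=0)) : e*d - f*c = 0 := by
  rcases not_and_or.1 hPQ with h | h
  · have h3 : Pp*(e*d - f*c) = 0 := by linear_combination d*h1 - f*h2
    exact (mul_eq_zero.1 h3).resolve_left h
  · have h3 : Qp*(e*d - f*c) = 0 := by linear_combination e*h2 - c*h1
    exact (mul_eq_zero.1 h3).resolve_left h

lemma dirzero {e f c d v1 v2 : ℂ} (hpar : e*d - f*c = 0) (hcd : ¬(c=0∧d=0))
    (hv : c*v1 + d*v2 = 0) : e*v1 + f*v2 = 0 := by
  rcases not_and_or.1 hcd with h | h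
  · have h3 : c*(e*v1 + f*v2) = 0 := by linear_combination e*hv - v2*hpar
    exact (mul_eq_zero.1 h3).resolve_left h
  · have h3 : d*(e*v1 + f*v2) = 0 := by linear_combination f*hv + v1*hpar
    exact (mul_eq_zero.1 h3).resolve_left h

lemma straighten (U : Set Pt) (hUo : IsOpen U) (hU0 : (0:Pt) ∈ U)
    (P Q xt S : Pt → ℂ)
    (hP : AnalyticOnNhd ℂ P U) (hQ : AnalyticOnNhd ℂ Q U)
    (hxt : AnalyticOnNhd ℂ xt U) (hS : AnalyticOnNhd ℂ S U)
    (hX0 : ¬(P 0 = 0 ∧ Q 0 = 0))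
    (hXxt : ∀ p ∈ U, P p * pdx xt p + Q p * pdy xt p = 0)
    (hXS : ∀ p ∈ U, P p * pdx S p + Q p * pdy S p = 0)
    (hdxt0 : ¬(pdx xt 0 = 0 ∧ pdy xt 0 = 0))
    (hxt0 : xt 0 = 0) :
    ∃ ε > 0, ∃ G : ℂ → ℂ, AnalyticOnNhd ℂ G (Metric.ball (0:ℂ) ε) ∧
      ∃ V : Set Pt, IsOpen V ∧ (0:Pt) ∈ V ∧ V ⊆ U ∧
        (∀ p ∈ V, xt p ∈ Metric.ball (0:ℂ) ε) ∧ ∀ p ∈ V, S p = G (xt p) := by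
  classical
  -- choose a linear functional transverse to X at 0
  obtain ⟨α, β, hαβ⟩ : ∃ α β : ℂ, α * P 0 + β * Q 0 ≠ 0 := by
    rcases not_and_or.1 hX0 with h | h
    · exact ⟨1, 0, by simpa using h⟩
    · exact ⟨0, 1, by simpa using h⟩
  set Wl : Pt →L[ℂ] ℂ :=
    α • ContinuousLinearMap.fst ℂ ℂ ℂ + β • ContinuousLinearMap.snd ℂ ℂ ℂ with hWldef
  have hWl : ∀ p : Pt, Wl p = α * p.1 + β * p.2 := fun p => rfl
  set Φ : Pt → Pt := fun p => (xt p, Wl p) with hΦdef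
  have hΦana : ∀ p ∈ U, AnalyticAt ℂ Φ p := fun p hp => (hxt p hp).prod (Wl.analyticAt p)
  have hΦ0 : Φ 0 = 0 := by
    simp [hΦdef, hxt0, Prod.ext_iff]
  -- the good region
  set Good : Pt → Prop := fun p => p ∈ U ∧ ¬(P p = 0 ∧ Q p = 0) ∧
    ¬(pdx xt p = 0 ∧ pdy xt p = 0) ∧ α * P p + β * Q p ≠ 0 with hGooddef
  have hPc : ContinuousAt P 0 := (hP 0 hU0).continuousAt
  have hQc : ContinuousAt Q 0 := (hQ 0 hU0).continuousAt
  have hev : ∀ v : Pt, ContinuousAt (fun p => fderiv ℂ xt p v) 0 := by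
    intro v
    have h1 : ContinuousAt (fderiv ℂ xt) 0 := ((hxt.fderiv) 0 hU0).continuousAt
    have h2 : ContinuousAt (fun q : (Pt →L[ℂ] ℂ) × Pt => q.1 q.2) (fderiv ℂ xt 0, v) :=
      isBoundedBilinearMap_apply.continuous.continuousAt
    exact Filter.Tendsto.comp h2 (h1.prodMk continuousAt_const)
  have hpdxc : ContinuousAt (fun p => pdx xt p) 0 := hev (1,0)
  have hpdyc : ContinuousAt (fun p => pdy xt p) 0 := hev (0,1)
  have hgood : ∀ᶠ p in 𝓝 (0:Pt), Good p := by
    have e1 : ∀ᶠ p in 𝓝 (0:Pt), p ∈ U := hUo.mem_nhds hU0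
    have e2 : ∀ᶠ p in 𝓝 (0:Pt), (P p, Q p) ≠ (0,0) := by
      refine (hPc.prodMk hQc).eventually_ne ?_
      simp only [ne_eq, Prod.mk.injEq, not_and_or] at *
      tauto
    have e3 : ∀ᶠ p in 𝓝 (0:Pt), (pdx xt p, pdy xt p) ≠ (0,0) := by
      refine (hpdxc.prodMk hpdyc).eventually_ne ?_
      simp only [ne_eq, Prod.mk.injEq, not_and_or] at *
      tauto
    have e4 : ∀ᶠ p in 𝓝 (0:Pt), α * P p + β * Q p ≠ 0 := by
      have : ContinuousAt (fun p => α * P p + β * Q p) 0 :=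
        ((continuousAt_const.mul hPc).add (continuousAt_const.mul hQc))
      exact this.eventually_ne hαβ
    filter_upwards [e1, e2, e3, e4] with p h1 h2 h3 h4
    refine ⟨h1, ?_, ?_, h4⟩
    · simpa [Prod.mk.injEq, not_and_or, ne_eq] using h2
    · simpa [Prod.mk.injEq, not_and_or, ne_eq] using h3
  -- at good points the derivative of Φ is invertible
  have hEquiv : ∀ p, Good p → ∃ E : Pt ≃L[ℂ] Pt, (E : Pt →L[ℂ] Pt) = fderiv ℂ Φ p := by
    intro p hp
    obtain ⟨hpU, hPQ, hab, hw⟩ := hp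
    have hxtd : DifferentiableAt ℂ xt p := (hxt p hpU).differentiableAt
    have hdΦ : fderiv ℂ Φ p = (fderiv ℂ xt p).prod Wl := by
      have h1 : HasFDerivAt Φ ((fderiv ℂ xt p).prod Wl) p :=
        HasFDerivAt.prodMk hxtd.hasFDerivAt Wl.hasFDerivAt
      exact h1.fderiv
    have hinj : Function.Injective (fderiv ℂ Φ p) := by
      rw [hdΦ]
      intro v v' hvv'
      have hzero : (fderiv ℂ xt p).prod Wl (v - v') = 0 := by
        rw [map_sub, hvv', sub_self]
      have h1 : fderiv ℂ xt p (v - v') = 0 := congrArg Prod.fst hzero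
      have h2 : Wl (v - v') = 0 := congrArg Prod.snd hzero
      have e1 : pdx xt p * (v-v').1 + pdy xt p * (v-v').2 = 0 := by
        rw [fderiv_eval] at h1; linear_combination h1
      have e2 : α * (v-v').1 + β * (v-v').2 = 0 := by
        rw [hWl] at h2; exact h2
      obtain ⟨z1, z2⟩ := ker_triv e1 e2 (hXxt p hpU) hab hw
      have : v - v' = 0 := Prod.ext z1 z2
      exact sub_eq_zero.1 this
    have hinj' : Function.Injective ((fderiv ℂ Φ p : Pt →ₗ[ℂ] Pt)) := hinj
    have hsurj : Function.Surjective ((fderiv ℂ Φ p : Pt →ₗ[ℂ] Pt)) :=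
      (LinearMap.injective_iff_surjective).1 hinj'
    refine ⟨(LinearEquiv.ofBijective (fderiv ℂ Φ p : Pt →ₗ[ℂ] Pt)
      ⟨hinj', hsurj⟩).toContinuousLinearEquiv, ?_⟩
    exact ContinuousLinearMap.ext fun v => rfl
  have hgood0 : Good 0 := ⟨hU0, hX0, hdxt0, hαβ⟩
  obtain ⟨E0, hE0⟩ := hEquiv 0 hgood0
  have hstrict : HasStrictFDerivAt Φ (E0 : Pt →L[ℂ] Pt) 0 := by
    rw [hE0]
    exact (hΦana 0 hU0).hasStrictFDerivAt
  set PH := hstrict.toOpenPartialHomeomorph Φ with hPHdef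
  have hPHcoe : ⇑PH = Φ := rfl
  set ψ : Pt → Pt := ⇑PH.symm with hψdef
  have h0src : (0:Pt) ∈ PH.source := hstrict.mem_toOpenPartialHomeomorph_source
  have h0tgt : (0:Pt) ∈ PH.target := by
    have := PH.map_source h0src
    rwa [hPHcoe, hΦ0] at this
  have hψ0 : ψ 0 = 0 := by
    have := PH.left_inv h0src
    rwa [hPHcoe, hΦ0] at this
  have hψc : Filter.Tendsto ψ (𝓝 0) (𝓝 (0:Pt)) := by
    have h := PH.continuousAt_symm h0tgt
    rwa [ContinuousAt, show (PH.symm : Pt → Pt) 0 = (0:Pt) from hψ0] at h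
  set H : Pt → ℂ := fun q => S (ψ q) with hHdef
  -- main eventual properties
  have hmain : ∀ᶠ q in 𝓝 (0:Pt), DifferentiableAt ℂ H q ∧ fderiv ℂ H q (0,1) = 0 := by
    have htgtev : ∀ᶠ q in 𝓝 (0:Pt), q ∈ PH.target := PH.open_target.mem_nhds h0tgt
    filter_upwards [htgtev, hψc.eventually hgood] with q hqt hqg
    obtain ⟨E, hE⟩ := hEquiv (ψ q) hqg
    have hqU : ψ q ∈ U := hqg.1
    have hψcontq : ContinuousAt ψ q := PH.continuousAt_symm hqt
    have hΦdq : HasFDerivAt Φ (E : Pt →L[ℂ] Pt) (ψ q) := by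
      rw [hE]
      exact (hΦana (ψ q) hqU).differentiableAt.hasFDerivAt
    have hrinv : ∀ᶠ y in 𝓝 q, Φ (ψ y) = y := by
      filter_upwards [PH.open_target.mem_nhds hqt] with y hy
      have := PH.right_inv hy
      rwa [hPHcoe] at this
    have hψd : HasFDerivAt ψ (E.symm : Pt →L[ℂ] Pt) q :=
      HasFDerivAt.of_local_left_inverse hψcontq hΦdq hrinv
    have hSd : DifferentiableAt ℂ S (ψ q) := (hS _ hqU).differentiableAt
    have hDH : DifferentiableAt ℂ H q := hSd.comp q hψd.differentiableAt
    refine ⟨hDH, ?_⟩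
    set vq : Pt := fderiv ℂ ψ q (0,1) with hvq
    -- xt ∘ ψ = fst near q
    have hxtψ : (fun y => xt (ψ y)) =ᶠ[𝓝 q] (fun y : Pt => y.1) :=
      hrinv.mono fun y hy => congrArg Prod.fst hy
    have hxtzero : fderiv ℂ xt (ψ q) vq = 0 := by
      have hcomp : fderiv ℂ (fun y => xt (ψ y)) q
          = (fderiv ℂ xt (ψ q)).comp (fderiv ℂ ψ q) := by
        exact fderiv_comp q ((hxt _ hqU).differentiableAt) hψd.differentiableAt
      have h2 : fderiv ℂ (fun y => xt (ψ y)) q = fderiv ℂ (fun y : Pt => y.1) q :=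
        hxtψ.fderiv_eq
      have h3 : fderiv ℂ (fun y : Pt => y.1) q (0,1) = 0 := by
        rw [show (fun y : Pt => y.1) = Prod.fst from rfl, fderiv_fst]
        rfl
      have := congrArg (fun L => L ((0:ℂ),(1:ℂ))) (hcomp.symm.trans h2)
      simpa [hvq] using this.trans h3
    have hv : pdx xt (ψ q) * vq.1 + pdy xt (ψ q) * vq.2 = 0 := by
      rw [fderiv_eval] at hxtzero; linear_combination hxtzero
    have hpar := parallel (hXS _ hqU) (hXxt _ hqU) hqg.2.1
    have hSzero : fderiv ℂ S (ψ q) vq = 0 := by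
      rw [fderiv_eval]
      have := dirzero hpar hqg.2.2.1 hv
      linear_combination this
    have hcomp : fderiv ℂ H q = (fderiv ℂ S (ψ q)).comp (fderiv ℂ ψ q) :=
      fderiv_comp q hSd hψd.differentiableAt
    rw [hcomp]
    simpa [hvq] using hSzero
  -- choose a polydisc inside the good region
  obtain ⟨T, hTnhds, hT⟩ := hmain.exists_mem
  obtain ⟨ε, hε, hball⟩ := Metric.mem_nhds_iff.1 hTnhds
  have hKT : Metric.ball (0:ℂ) ε ×ˢ Metric.ball (0:ℂ) ε ⊆ T := by
    rw [ball_prod_same]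
    exact hball
  -- H is constant in the second variable on the polydisc
  have hconst : ∀ s ∈ Metric.ball (0:ℂ) ε, ∀ t ∈ Metric.ball (0:ℂ) ε,
      H (s, t) = H (s, 0) := by
    intro s hs t ht
    have h0ball : (0:ℂ) ∈ Metric.ball (0:ℂ) ε := Metric.mem_ball_self hε
    have hmem : ∀ t' ∈ Metric.ball (0:ℂ) ε, ((s,t') : Pt) ∈ T := fun t' ht' =>
      hKT (Set.mk_mem_prod hs ht')
    set φ : ℂ → ℂ := fun t' => H (s, t') with hφdef
    have hmder : ∀ t' : ℂ, HasDerivAt (fun t'' : ℂ => ((s : ℂ), t'')) ((0:ℂ),(1:ℂ)) t' :=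
      fun t' => (hasDerivAt_const t' s).prodMk (hasDerivAt_id t')
    have hφd : ∀ t' ∈ Metric.ball (0:ℂ) ε, HasDerivAt φ 0 t' := by
      intro t' ht'
      have hH := hT _ (hmem t' ht')
      have := hH.1.hasFDerivAt.comp_hasDerivAt t' (hmder t')
      rw [hH.2] at this
      exact this
    have hφdiff : DifferentiableOn ℂ φ (Metric.ball (0:ℂ) ε) := fun t' ht' =>
      ((hφd t' ht').differentiableAt).differentiableWithinAt
    have hφ' : ∀ t' ∈ Metric.ball (0:ℂ) ε,
        fderivWithin ℂ φ (Metric.ball (0:ℂ) ε) t' = 0 := by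
      intro t' ht'
      rw [fderivWithin_of_isOpen Metric.isOpen_ball ht']
      have := (hφd t' ht').hasFDerivAt.fderiv
      rw [this]
      ext z
      simp
    exact (convex_ball (0:ℂ) ε).is_const_of_fderivWithin_eq_zero hφdiff hφ' ht h0ball
  -- define G
  set G : ℂ → ℂ := fun s => H (s, 0) with hGdef
  have hGana : AnalyticOnNhd ℂ G (Metric.ball (0:ℂ) ε) := by
    apply DifferentiableOn.analyticOnNhd _ Metric.isOpen_ball
    intro s hs
    have h0ball : (0:ℂ) ∈ Metric.ball (0:ℂ) ε := Metric.mem_ball_self hε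
    have hH := hT _ (hKT (Set.mk_mem_prod hs h0ball))
    have hmder : HasDerivAt (fun s' : ℂ => ((s' : ℂ), (0:ℂ))) ((1:ℂ),(0:ℂ)) s :=
      (hasDerivAt_id s).prodMk (hasDerivAt_const s 0)
    exact ((hH.1.hasFDerivAt.comp_hasDerivAt s hmder).differentiableAt).differentiableWithinAt
  -- the neighborhood V
  set V : Set Pt := (PH.source ∩ Φ ⁻¹' (Metric.ball (0:Pt) ε)) ∩ U with hVdef
  have hVopen : IsOpen V := by
    apply IsOpen.inter _ hUo
    have hcont : ContinuousOn Φ PH.source := by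
      rw [← hPHcoe]; exact PH.continuousOn
    exact hcont.isOpen_inter_preimage PH.open_source Metric.isOpen_ball
  have h0V : (0:Pt) ∈ V := by
    refine ⟨⟨h0src, ?_⟩, hU0⟩
    simp [Set.mem_preimage, hΦ0, Metric.mem_ball_self hε]
  refine ⟨ε, hε, G, hGana, V, hVopen, h0V, fun p hp => hp.2, ?_, ?_⟩
  · rintro p ⟨⟨hpsrc, hpball⟩, hpU⟩
    have : Φ p ∈ Metric.ball (0:ℂ) ε ×ˢ Metric.ball (0:ℂ) ε := by
      rw [ball_prod_same]; exact hpball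
    exact this.1
  · rintro p ⟨⟨hpsrc, hpball⟩, hpU⟩
    have hmem : Φ p ∈ Metric.ball (0:ℂ) ε ×ˢ Metric.ball (0:ℂ) ε := by
      rw [ball_prod_same]; exact hpball
    have hli : ψ (Φ p) = p := by
      have := PH.left_inv hpsrc
      rwa [hPHcoe] at this
    calc S p = H (Φ p) := by rw [hHdef]; simp [hli]
    _ = H (xt p, Wl p) := rfl
    _ = H (xt p, 0) := hconst _ hmem.1 _ hmem.2
    _ = G (xt p) := rfl

lemma hasFDerivAt_sum_pow {k : ℕ} (c : Fin k → ℂ) (u : Fin k → Pt → ℂ) (m : ℕ) (p : Pt)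
    (hd : ∀ i, DifferentiableAt ℂ (u i) p) :
    HasFDerivAt (fun q => ∑ i, c i * u i q ^ (m+1))
      (∑ i, (c i * ((m+1 : ℕ) * u i p ^ m)) • fderiv ℂ (u i) p) p := by
  apply HasFDerivAt.fun_sum
  intro i _
  have h1 : HasFDerivAt (fun q => u i q ^ (m+1))
      (((m+1 : ℕ) * u i p ^ m) • fderiv ℂ (u i) p) p := by
    have := (hasDerivAt_pow (m+1) (u i p)).comp_hasFDerivAt p (hd i).hasFDerivAt
    simpa [Function.comp_def] using this
  have := h1.const_mul (c i)
  simpa [smul_smul] using this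

lemma fderiv_sum_pow_apply {k : ℕ} (c : Fin k → ℂ) (u : Fin k → Pt → ℂ) (m : ℕ) (p : Pt)
    (hd : ∀ i, DifferentiableAt ℂ (u i) p) (v : Pt) :
    fderiv ℂ (fun q => ∑ i, c i * u i q ^ (m+1)) p v
      = ∑ i, c i * ((m+1 : ℕ) * u i p ^ m) * (fderiv ℂ (u i) p v) := by
  rw [(hasFDerivAt_sum_pow c u m p hd).fderiv]
  simp [ContinuousLinearMap.sum_apply, mul_assoc]

lemma xt_surj (xt : Pt → ℂ) (hxtA : AnalyticAt ℂ xt 0) (hxt0 : xt 0 = 0)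
    (hdxt0 : ¬(pdx xt 0 = 0 ∧ pdy xt 0 = 0))
    (M : Set Pt) (hM : M ∈ 𝓝 (0:Pt)) : ∃ W ∈ 𝓝 (0:ℂ), ∀ z ∈ W, ∃ p ∈ M, xt p = z := by
  obtain ⟨v, hd⟩ : ∃ v : Pt, fderiv ℂ xt 0 v ≠ 0 := by
    rcases not_and_or.1 hdxt0 with h | h
    · exact ⟨(1,0), h⟩
    · exact ⟨(0,1), h⟩
  set d := fderiv ℂ xt 0 v with hdd
  set m : ℂ →L[ℂ] Pt := ContinuousLinearMap.smulRight (ContinuousLinearMap.id ℂ ℂ) v with hm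
  have hmv : ∀ t : ℂ, m t = t • v := fun t => rfl
  set h : ℂ → ℂ := fun t => xt (t • v) with hh
  have hs : HasStrictFDerivAt xt (fderiv ℂ xt 0) ((0:ℂ) • v) := by
    simpa using hxtA.hasStrictFDerivAt
  have hcomp : HasStrictFDerivAt h ((fderiv ℂ xt 0).comp m) 0 := hs.comp 0 m.hasStrictFDerivAt
  have hsd : HasStrictDerivAt h d 0 := by
    have := hcomp.hasStrictDerivAt
    simpa [hmv, hdd] using this
  have Estrict := hsd.hasStrictFDerivAt_equiv hd
  set χ := HasStrictFDerivAt.localInverse h _ 0 Estrict with hχ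
  have h0 : h 0 = 0 := by simp [hh, hxt0]
  have hri : ∀ᶠ z in 𝓝 (0:ℂ), h (χ z) = z := by
    have := Estrict.eventually_right_inverse
    rwa [h0] at this
  have hχ0 : χ 0 = 0 := by
    have := Estrict.eventually_left_inverse.self_of_nhds
    rwa [h0] at this
  have hχc : ContinuousAt χ 0 := by
    have := Estrict.localInverse_continuousAt
    rwa [h0] at this
  have hmap : Tendsto (fun z => (χ z) • v) (𝓝 (0:ℂ)) (𝓝 (0:Pt)) := by
    have : Tendsto (fun z => (χ z) • v) (𝓝 (0:ℂ)) (𝓝 ((χ 0) • v)) :=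
      (hχc.smul continuousAt_const)
    simpa [hχ0] using this
  refine ⟨(fun z => (χ z) • v) ⁻¹' M ∩ {z | h (χ z) = z}, ?_, ?_⟩
  · exact Filter.inter_mem (hmap hM) hri
  · rintro z ⟨hz1, hz2⟩
    exact ⟨χ z • v, hz1, hz2⟩

/-- With `W`, `X`, `u_i`, `x̃` as before, if
`∑ c_i u_i^r du_i = 0` on `U`, then there is a holomorphic `g` near `0 ∈ ℂ`, with germ
at `0` unique, such that `∑ c_i u_i^{r+1} du_i + (g∘x̃)·dx̃ = 0` near `0`. -/
theorem stmt_9 (k : ℕ) (U : Set Pt) (hU : IsPolydisc U) (ω : Fin k → Form1)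
    (hweb : IsWeb ω U) (P Q : Pt → ℂ)
    (hP : AnalyticOnNhd ℂ P U) (hQ : AnalyticOnNhd ℂ Q U)
    (hinf : IsInfAut P Q ω U) (htr : IsTransverseTo P Q ω U)
    (hX0 : (P 0, Q 0) ≠ (0, 0))
    (u : Fin k → Pt → ℂ) (hu : ∀ i, IsCanonicalFI P Q (ω i) (u i) U)
    (xt : Pt → ℂ) (hxt : AnalyticOnNhd ℂ xt U) (hxt0 : xt 0 = 0)
    (hXxt : ∀ p ∈ U, Xf P Q xt p = 0) (hdxt0 : (pdx xt 0, pdy xt 0) ≠ (0, 0))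
    (c : Fin k → ℂ) (r : ℕ)
    (hrel : ∀ p ∈ U, ∑ i, c i * u i p ^ r * pdx (u i) p = 0 ∧
                     ∑ i, c i * u i p ^ r * pdy (u i) p = 0) :
    ∃ D ∈ 𝓝 (0 : ℂ), ∃ g : ℂ → ℂ, AnalyticOnNhd ℂ g D ∧
      (∃ V ∈ 𝓝 (0 : Pt), (∀ p ∈ V, xt p ∈ D) ∧
        ∀ p ∈ V, ∑ i, c i * u i p ^ (r + 1) * pdx (u i) p + g (xt p) * pdx xt p = 0 ∧
                 ∑ i, c i * u i p ^ (r + 1) * pdy (u i) p + g (xt p) * pdy xt p = 0) ∧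
      (∀ (D' : Set ℂ), D' ∈ 𝓝 (0 : ℂ) → ∀ g' : ℂ → ℂ, AnalyticOnNhd ℂ g' D' →
        (∃ V' ∈ 𝓝 (0 : Pt), (∀ p ∈ V', xt p ∈ D') ∧
          ∀ p ∈ V', ∑ i, c i * u i p ^ (r + 1) * pdx (u i) p + g' (xt p) * pdx xt p = 0 ∧
                    ∑ i, c i * u i p ^ (r + 1) * pdy (u i) p + g' (xt p) * pdy xt p = 0) →
        ∃ W ∈ 𝓝 (0 : ℂ), Set.EqOn g g' W) := by

  classical
  obtain ⟨r1, s1, hr1, hs1, hUeq⟩ := hU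
  have hUo : IsOpen U := by
    rw [hUeq]; exact Metric.isOpen_ball.prod Metric.isOpen_ball
  have hU0 : (0:Pt) ∈ U := by
    rw [hUeq]; exact ⟨Metric.mem_ball_self hr1, Metric.mem_ball_self hs1⟩
  have hUconv : Convex ℝ U := by
    rw [hUeq]; exact (convex_ball _ _).prod (convex_ball _ _)
  have huA : ∀ i, AnalyticOnNhd ℂ (u i) U := fun i => (hu i).1
  have hu0 : ∀ i, u i 0 = 0 := fun i => (hu i).2.1
  have hud : ∀ p ∈ U, ∀ i, DifferentiableAt ℂ (u i) p := fun p hp i =>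
    (huA i p hp).differentiableAt
  have hX0' : ¬(P 0 = 0 ∧ Q 0 = 0) := by simpa [Prod.ext_iff] using hX0
  have hdxt0' : ¬(pdx xt 0 = 0 ∧ pdy xt 0 = 0) := by simpa [Prod.ext_iff] using hdxt0
  -- X(u_i) = 1
  have hXu : ∀ i, ∀ p ∈ U, P p * pdx (u i) p + Q p * pdy (u i) p = 1 := by
    intro i p hp
    obtain ⟨h1, h2⟩ := (hu i).2.2 p hp
    have hc : contr P Q (ω i) p ≠ 0 := htr i p hp
    rw [h1, h2]
    rw [contr] at hc ⊢
    rw [mul_div_assoc', mul_div_assoc', ← add_div, div_eq_one_iff_eq hc]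
    ring
  -- the relation of order r, contracted with X
  have hsum_r : ∀ p ∈ U, ∑ i, c i * u i p ^ r = 0 := by
    intro p hp
    have h1 : ∑ i, c i * u i p ^ r
        = ∑ i, (P p * (c i * u i p ^ r * pdx (u i) p) + Q p * (c i * u i p ^ r * pdy (u i) p)) := by
      refine Finset.sum_congr rfl fun i _ => ?_
      have := hXu i p hp
      calc c i * u i p ^ r = c i * u i p ^ r * (P p * pdx (u i) p + Q p * pdy (u i) p) := by
            rw [this]; ring
      _ = P p * (c i * u i p ^ r * pdx (u i) p) + Q p * (c i * u i p ^ r * pdy (u i) p) := by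
            ring
    rw [h1, Finset.sum_add_distrib, ← Finset.mul_sum, ← Finset.mul_sum,
      (hrel p hp).1, (hrel p hp).2]
    ring
  -- the relation of order r+1 : T = const = 0
  have hT0 : ∀ p ∈ U, ∑ i, c i * u i p ^ (r+1) = 0 := by
    set T : Pt → ℂ := fun p => ∑ i, c i * u i p ^ (r+1) with hTdef
    have hTd : DifferentiableOn ℂ T U := by
      intro p hp
      exact (hasFDerivAt_sum_pow c u r p (hud p hp)).differentiableAt.differentiableWithinAt
    have hT' : ∀ p ∈ U, fderivWithin ℂ T U p = 0 := by
      intro p hp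
      rw [fderivWithin_of_isOpen hUo hp]
      refine ContinuousLinearMap.ext fun v => ?_
      rw [show T = (fun q => ∑ i, c i * u i q ^ (r+1)) from rfl]
      rw [fderiv_sum_pow_apply c u r p (hud p hp) v]
      have h1 : ∀ i, c i * ((r+1 : ℕ) * u i p ^ r) * (fderiv ℂ (u i) p v)
          = ((r+1 : ℕ) : ℂ) * (v.1 * (c i * u i p ^ r * pdx (u i) p)
            + v.2 * (c i * u i p ^ r * pdy (u i) p)) := by
        intro i
        rw [fderiv_eval]
        ring
      rw [Finset.sum_congr rfl fun i _ => h1 i, ← Finset.mul_sum]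
      rw [Finset.sum_add_distrib, ← Finset.mul_sum, ← Finset.mul_sum,
        (hrel p hp).1, (hrel p hp).2]
      simp
    intro p hp
    have hconst : T p = T 0 :=
      hUconv.is_const_of_fderivWithin_eq_zero hTd hT' hp hU0
    have hTzero : T 0 = 0 := by
      simp [hTdef, hu0]
    show T p = 0
    rw [hconst, hTzero]
  -- the potential S
  have hκ : ((r:ℂ) + 2) ≠ 0 := by
    have : ((r + 2 : ℕ) : ℂ) ≠ 0 := Nat.cast_ne_zero.2 (by omega)
    push_cast at this
    convert this using 2
  set S : Pt → ℂ := fun p => ∑ i, (c i / ((r:ℂ)+2)) * u i p ^ (r+2) with hSdef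
  have hSana : AnalyticOnNhd ℂ S U := by
    intro p hp
    exact Finset.analyticAt_fun_sum _ fun i _ => analyticAt_const.mul ((huA i p hp).pow _)
  have hpdS : ∀ p ∈ U, ∀ v : Pt, fderiv ℂ S p v
      = ∑ i, c i * u i p ^ (r+1) * fderiv ℂ (u i) p v := by
    intro p hp v
    rw [show S = (fun q => ∑ i, (c i / ((r:ℂ)+2)) * u i q ^ ((r+1)+1)) from rfl]
    rw [fderiv_sum_pow_apply (fun i => c i / ((r:ℂ)+2)) u (r+1) p (hud p hp) v]
    refine Finset.sum_congr rfl fun i _ => ?_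
    have : ((r+1+1 : ℕ) : ℂ) = (r:ℂ) + 2 := by push_cast; ring
    rw [this]
    field_simp
  have hpdxS : ∀ p ∈ U, pdx S p = ∑ i, c i * u i p ^ (r+1) * pdx (u i) p := by
    intro p hp
    rw [pdx, hpdS p hp]
    rfl
  have hpdyS : ∀ p ∈ U, pdy S p = ∑ i, c i * u i p ^ (r+1) * pdy (u i) p := by
    intro p hp
    rw [pdy, hpdS p hp]
    rfl
  have hXS : ∀ p ∈ U, P p * pdx S p + Q p * pdy S p = 0 := by
    intro p hp
    rw [hpdxS p hp, hpdyS p hp, Finset.mul_sum, Finset.mul_sum, ← Finset.sum_add_distrib]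
    have h1 : ∀ i, P p * (c i * u i p ^ (r+1) * pdx (u i) p)
        + Q p * (c i * u i p ^ (r+1) * pdy (u i) p) = c i * u i p ^ (r+1) := by
      intro i
      have := hXu i p hp
      calc P p * (c i * u i p ^ (r+1) * pdx (u i) p)
            + Q p * (c i * u i p ^ (r+1) * pdy (u i) p)
          = c i * u i p ^ (r+1) * (P p * pdx (u i) p + Q p * pdy (u i) p) := by ring
      _ = c i * u i p ^ (r+1) := by rw [this]; ring
    rw [Finset.sum_congr rfl fun i _ => h1 i]
    exact hT0 p hp
  -- straighten
  obtain ⟨ε, hε, G, hGana, V, hVo, h0V, hVU, hVxt, hVeq⟩ :=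
    straighten U hUo hU0 P Q xt S hP hQ hxt hSana hX0'
      (fun p hp => hXxt p hp) hXS hdxt0' hxt0
  set g : ℂ → ℂ := fun z => -(deriv G z) with hgdef
  have hgana : AnalyticOnNhd ℂ g (Metric.ball (0:ℂ) ε) := by
    intro z hz
    exact (hGana.deriv z hz).neg
  have hVmem : V ∈ 𝓝 (0:Pt) := hVo.mem_nhds h0V
  -- the identity satisfied by g
  have h1d : ∀ z w : ℂ, fderiv ℂ G z w = w * deriv G z := by
    intro z w
    have : w = w • (1:ℂ) := by simp
    rw [this, map_smul, smul_eq_mul, fderiv_apply_one_eq_deriv]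
    simp
  have hfdSV : ∀ p ∈ V, ∀ v : Pt, fderiv ℂ S p v = fderiv ℂ xt p v * deriv G (xt p) := by
    intro p hp v
    have hSG : fderiv ℂ S p = fderiv ℂ (fun q => G (xt q)) p := by
      apply Filter.EventuallyEq.fderiv_eq
      filter_upwards [hVo.mem_nhds hp] with q hq
      exact hVeq q hq
    have hGd : DifferentiableAt ℂ G (xt p) := (hGana _ (hVxt p hp)).differentiableAt
    have hxtd : DifferentiableAt ℂ xt p := (hxt p (hVU hp)).differentiableAt
    have hchain : fderiv ℂ (fun q => G (xt q)) p = (fderiv ℂ G (xt p)).comp (fderiv ℂ xt p) :=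
      fderiv_comp p hGd hxtd
    rw [hSG, hchain]
    simp only [ContinuousLinearMap.coe_comp', Function.comp_apply]
    rw [h1d]
  have hidg : ∀ p ∈ V,
      (∑ i, c i * u i p ^ (r + 1) * pdx (u i) p + g (xt p) * pdx xt p = 0) ∧
      (∑ i, c i * u i p ^ (r + 1) * pdy (u i) p + g (xt p) * pdy xt p = 0) := by
    intro p hp
    constructor
    · have h1 := hfdSV p hp (1,0)
      rw [show fderiv ℂ S p (1,0) = pdx S p from rfl,
        show fderiv ℂ xt p (1,0) = pdx xt p from rfl, ] at h1
      rw [← hpdxS p (hVU hp)]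
      rw [hgdef]
      rw [h1]
      ring
    · have h1 := hfdSV p hp (0,1)
      rw [show fderiv ℂ S p (0,1) = pdy S p from rfl,
        show fderiv ℂ xt p (0,1) = pdy xt p from rfl, ] at h1
      rw [← hpdyS p (hVU hp)]
      rw [hgdef]
      rw [h1]
      ring
  refine ⟨Metric.ball (0:ℂ) ε, Metric.ball_mem_nhds _ hε, g, hgana,
    ⟨V, hVmem, hVxt, hidg⟩, ?_⟩
  -- uniqueness
  intro D' hD' g' hg' hex'
  obtain ⟨V', hV', hV'xt, hid'⟩ := hex'
  have hevc : ∀ v : Pt, ContinuousAt (fun p => fderiv ℂ xt p v) 0 := by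
    intro v
    have h1 : ContinuousAt (fderiv ℂ xt) 0 := ((hxt.fderiv) 0 hU0).continuousAt
    have h2 : ContinuousAt (fun q : (Pt →L[ℂ] ℂ) × Pt => q.1 q.2) (fderiv ℂ xt 0, v) :=
      isBoundedBilinearMap_apply.continuous.continuousAt
    exact Filter.Tendsto.comp h2 (h1.prodMk continuousAt_const)
  have hgg' : ∀ᶠ p in 𝓝 (0:Pt), g (xt p) = g' (xt p) := by
    rcases not_and_or.1 hdxt0' with hnz | hnz
    · filter_upwards [hVmem, hV', (hevc (1,0)).eventually_ne hnz] with p h1 h2 h3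
      have e1 := (hidg p h1).1
      have e2 := (hid' p h2).1
      have e3 : (g (xt p) - g' (xt p)) * pdx xt p = 0 := by
        rw [pdx] at e1 e2 ⊢
        linear_combination e1 - e2
      have := (mul_eq_zero.1 e3).resolve_right h3
      exact sub_eq_zero.1 this
    · filter_upwards [hVmem, hV', (hevc (0,1)).eventually_ne hnz] with p h1 h2 h3
      have e1 := (hidg p h1).2
      have e2 := (hid' p h2).2
      have e3 : (g (xt p) - g' (xt p)) * pdy xt p = 0 := by
        rw [pdy] at e1 e2 ⊢
        linear_combination e1 - e2
      have := (mul_eq_zero.1 e3).resolve_right h3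
      exact sub_eq_zero.1 this
  obtain ⟨M, hM, hMg⟩ := hgg'.exists_mem
  obtain ⟨W, hW, hWs⟩ := xt_surj xt (hxt 0 hU0) hxt0 hdxt0' M hM
  refine ⟨W, hW, fun z hz => ?_⟩
  obtain ⟨p, hpM, hpz⟩ := hWs z hz
  rw [← hpz]
  exact hMg p hpM
end
end
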